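/- For a ∈ [1/2, 1), with f_a(x) = μ xⁿ + (1 − μ) x where μ = (a − 1/2)/(a − aⁿ) and aⁿ < 1/2, the function ψ₀(x) = sin(π f_a(x)) satisfies ψ₀(x) > 0 for all x ∈ (0,1), ψ₀(0) = ψ₀(1) = 0, and ψ₀'(x) ≠ 0 for all x ∈ (0,1) with x ≠ a. -/

import Mathlib

open Real

open Real in
lemma cos_pi_mul_ne_zero_aux (t : ℝ) (h0 : 0 < t) (h1 : t < 1) (hne : t ≠ 1/2) :
    Real.cos (π * t) ≠ 0 := by
  rcases lt_or_gt_of_ne hne with h | h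
  · have hp : (0:ℝ) < π := Real.pi_pos
    have ha : 0 < π * t := mul_pos hp h0
    have hb : π * t < π * (1/2) := mul_lt_mul_of_pos_left h hp
    have : Real.cos (π * t) > 0 := by
      apply Real.cos_pos_of_mem_Ioo
      constructor <;> [linarith; linarith]
    linarith
  · have hp : (0:ℝ) < π := Real.pi_pos
    have ha : π * (1/2) < π * t := mul_lt_mul_of_pos_left h hp
    have hb : π * t < π * 1 := mul_lt_mul_of_pos_left h1 hp
    have : Real.cos (π * t) < 0 := by
      apply Real.cos_neg_of_pi_div_two_lt_of_lt <;> linarith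
    linarith

theorem psi0_properties (a : ℝ) (ha : a ∈ Set.Ico (1/2 : ℝ) 1)
    (n : ℕ) (hn1 : 1 ≤ n) (hn : a ^ n < 1/2) :
    let μ : ℝ := (a - 1/2) / (a - a ^ n)
    let f : ℝ → ℝ := fun x => μ * x ^ n + (1 - μ) * x
    let ψ₀ : ℝ → ℝ := fun x => Real.sin (π * f x)
    (∀ x ∈ Set.Ioo (0:ℝ) 1, 0 < ψ₀ x) ∧ ψ₀ 0 = 0 ∧ ψ₀ 1 = 0 ∧
      (∀ x ∈ Set.Ioo (0:ℝ) 1, x ≠ a → deriv ψ₀ x ≠ 0) := by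
  intro μ f ψ₀
  obtain ⟨ha1, ha2⟩ := ha
  have hsub : (0:ℝ) < a - a ^ n := by linarith
  have hμ0 : 0 ≤ μ := div_nonneg (by linarith) (le_of_lt hsub)
  have hμ1 : μ < 1 := by
    rw [div_lt_one hsub]; linarith
  -- f is strictly monotone on [0,∞)
  have hmono : ∀ x y : ℝ, 0 ≤ x → x < y → f x < f y := by
    intro x y hx hxy
    have hpow : x ^ n ≤ y ^ n := pow_le_pow_left₀ hx (le_of_lt hxy) n
    have h1 : μ * x ^ n ≤ μ * y ^ n := mul_le_mul_of_nonneg_left hpow hμ0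
    have h2 : (1 - μ) * x < (1 - μ) * y := by
      apply mul_lt_mul_of_pos_left hxy; linarith
    simp only [f]; linarith
  have hfa : f a = 1/2 := by
    simp only [f, μ]
    field_simp
    ring
  have hfrange : ∀ x ∈ Set.Ioo (0:ℝ) 1, 0 < f x ∧ f x < 1 := by
    intro x ⟨hx0, hx1⟩
    constructor
    · have h1 : 0 ≤ μ * x ^ n := mul_nonneg hμ0 (by positivity)
      have h2 : 0 < (1 - μ) * x := mul_pos (by linarith) hx0
      simp only [f]; linarith
    · have hxn : x ^ n ≤ x := by
        calc x ^ n ≤ x ^ 1 := pow_le_pow_of_le_one (le_of_lt hx0) (le_of_lt hx1) hn1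
        _ = x := pow_one x
      have h1 : μ * x ^ n ≤ μ * x := mul_le_mul_of_nonneg_left hxn hμ0
      simp only [f]; nlinarith
  refine ⟨?_, ?_, ?_, ?_⟩
  · intro x hx
    obtain ⟨h0, h1⟩ := hfrange x hx
    apply Real.sin_pos_of_pos_of_lt_pi
    · positivity
    · nlinarith [Real.pi_pos]
  · simp only [ψ₀, f]
    rw [zero_pow (by omega)]
    simp
  · simp only [ψ₀, f, one_pow]
    norm_num
  · intro x hx hxa
    obtain ⟨hx0, hx1⟩ := hx
    obtain ⟨hf0, hf1⟩ := hfrange x ⟨hx0, hx1⟩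
    have hinner : HasDerivAt (fun y => π * f y) (π * (μ * (n * x ^ (n-1)) + (1 - μ))) x := by
      have := (((hasDerivAt_pow n x).const_mul μ).add ((hasDerivAt_id x).const_mul (1-μ))).const_mul π
      simpa [f] using this
    have hψ : HasDerivAt ψ₀ (Real.cos (π * f x) * (π * (μ * (n * x ^ (n-1)) + (1 - μ)))) x := by
      have := (Real.hasDerivAt_sin (π * f x)).comp x hinner
      exact this
    rw [hψ.deriv]
    have hcos : Real.cos (π * f x) ≠ 0 := by
      apply cos_pi_mul_ne_zero_aux (f x) hf0 hf1
      intro heq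
      rcases lt_trichotomy x a with hlt | h | hgt
      · have := hmono x a (le_of_lt hx0) hlt; rw [hfa] at this; linarith
      · exact hxa h
      · have := hmono a x (by linarith) hgt; rw [hfa] at this; linarith
    have hderiv_pos : 0 < π * (μ * (n * x ^ (n-1)) + (1 - μ)) := by
      have h1 : 0 ≤ μ * (n * x ^ (n-1)) := mul_nonneg hμ0 (by positivity)
      have : 0 < μ * (n * x ^ (n-1)) + (1 - μ) := by linarith
      positivity
    exact mul_ne_zero hcos (ne_of_gt hderiv_pos)
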